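/- For r ∈ (−1,1), define h_r(ℓ) = 4^{−ℓ}·C(2ℓ,ℓ)·Σ_{n=0}^{ℓ} [C(2n,n)·C(2ℓ−2n,ℓ−n)/C(2ℓ,ℓ)]·(−r)^n. Then h_r(ℓ) ~ 1/√(ℓπ(1+r)) as ℓ → ∞, uniformly for r in compact subsets of (−1,1). -/

import Mathlib

open Filter Finset

namespace BuddAux

open Topology

lemma aux_alg (c K F u v p : ℝ) (hu : u ≠ 0) (hF : F ≠ 0) (hK : K ≠ 0) (hp : p ≠ 0)
    (hv : v ^ 2 = 2 * u ^ 2) :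
    c / p * u = c * K * K / (2 * u * (p * F ^ 2)) / (K / (v * F)) ^ 2 := by
  have hv0 : v ≠ 0 := by
    intro h
    rw [h] at hv
    simp at hv
    exact hu hv
  field_simp
  linear_combination (-c) * hv


/-- `buddA n = C(2n,n)/4^n`. -/
noncomputable def buddA (n : ℕ) : ℝ := (Nat.centralBinom n : ℝ) / 4 ^ n

lemma buddA_pos (n : ℕ) : 0 < buddA n := by
  have := Nat.centralBinom_pos n
  unfold buddA
  positivity

lemma buddA_zero : buddA 0 = 1 := by simp [buddA, Nat.centralBinom]

lemma buddA_one : buddA 1 = 1 / 2 := by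
  simp [buddA, Nat.centralBinom]
  norm_num [Nat.choose]

/-- key step: `c (m+1) + 2 * catalan m = 4 * c m` in ℕ. -/
lemma centralBinom_succ_add (m : ℕ) :
    Nat.centralBinom (m + 1) + 2 * catalan m = 4 * Nat.centralBinom m := by
  have h1 := Nat.succ_mul_centralBinom_succ m
  have h2 := succ_mul_catalan_eq_centralBinom m
  have key : (m + 1) * (Nat.centralBinom (m + 1) + 2 * catalan m)
      = (m + 1) * (4 * Nat.centralBinom m) := by
    rw [Nat.mul_add, h1]
    nlinarith [h2]
  exact Nat.eq_of_mul_eq_mul_left (Nat.succ_pos m) key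

/-- `2 * ∑ c n * catalan (ℓ - n) = c (ℓ+1)`. -/
lemma two_mul_conv_catalan (ℓ : ℕ) :
    2 * ∑ n ∈ range (ℓ + 1), Nat.centralBinom n * catalan (ℓ - n)
      = Nat.centralBinom (ℓ + 1) := by
  have hcat : ∀ n, Nat.centralBinom n = (n + 1) * catalan n :=
    fun n => (succ_mul_catalan_eq_centralBinom n).symm
  have hrefl : ∑ n ∈ range (ℓ + 1), (n + 1) * catalan n * catalan (ℓ - n)
      = ∑ n ∈ range (ℓ + 1), (ℓ - n + 1) * catalan (ℓ - n) * catalan n := by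
    rw [← Finset.sum_range_reflect]
    apply Finset.sum_congr rfl
    intro n hn
    have hn' : n ≤ ℓ := by simpa [Nat.lt_succ_iff] using hn
    have : ℓ + 1 - 1 - n = ℓ - n := by omega
    rw [this]
    have : ℓ - (ℓ - n) = n := by omega
    rw [this]
  have hc : ∑ ij ∈ Finset.HasAntidiagonal.antidiagonal ℓ, catalan ij.1 * catalan ij.2
      = ∑ n ∈ range (ℓ + 1), catalan n * catalan (ℓ - n) :=
    Finset.Nat.sum_antidiagonal_eq_sum_range_succ (fun x y => catalan x * catalan y) ℓ
  calc 2 * ∑ n ∈ range (ℓ + 1), Nat.centralBinom n * catalan (ℓ - n)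
      = ∑ n ∈ range (ℓ + 1), (n + 1) * catalan n * catalan (ℓ - n)
        + ∑ n ∈ range (ℓ + 1), (ℓ - n + 1) * catalan (ℓ - n) * catalan n := by
        rw [← hrefl, two_mul]
        congr 1 <;> (apply Finset.sum_congr rfl; intro n hn; rw [hcat n])
    _ = (ℓ + 2) * ∑ n ∈ range (ℓ + 1), catalan n * catalan (ℓ - n) := by
        rw [Finset.mul_sum, ← Finset.sum_add_distrib]
        apply Finset.sum_congr rfl
        intro n hn
        have hn' : n ≤ ℓ := by simpa [Nat.lt_succ_iff] using hn
        have h : n + 1 + (ℓ - n + 1) = ℓ + 2 := by omega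
        calc (n + 1) * catalan n * catalan (ℓ - n) + (ℓ - n + 1) * catalan (ℓ - n) * catalan n
            = (n + 1 + (ℓ - n + 1)) * (catalan n * catalan (ℓ - n)) := by ring
          _ = (ℓ + 2) * (catalan n * catalan (ℓ - n)) := by rw [h]
    _ = (ℓ + 2) * catalan (ℓ + 1) := by
        rw [← hc, ← catalan_succ']
    _ = Nat.centralBinom (ℓ + 1) := succ_mul_catalan_eq_centralBinom (ℓ + 1)

/-- The convolution identity `∑ C(2n,n) C(2(ℓ-n),ℓ-n) = 4^ℓ`. -/
lemma centralBinom_conv (ℓ : ℕ) :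
    ∑ n ∈ range (ℓ + 1), Nat.centralBinom n * Nat.centralBinom (ℓ - n) = 4 ^ ℓ := by
  induction ℓ with
  | zero => simp [Nat.centralBinom]
  | succ ℓ ih =>
    have step : ∑ n ∈ range (ℓ + 1), Nat.centralBinom n * Nat.centralBinom (ℓ + 1 - n)
        + 2 * ∑ n ∈ range (ℓ + 1), Nat.centralBinom n * catalan (ℓ - n)
        = 4 * ∑ n ∈ range (ℓ + 1), Nat.centralBinom n * Nat.centralBinom (ℓ - n) := by
      rw [Finset.mul_sum, Finset.mul_sum, ← Finset.sum_add_distrib]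
      apply Finset.sum_congr rfl
      intro n hn
      have hn' : n ≤ ℓ := by simpa [Nat.lt_succ_iff] using hn
      have h1 : ℓ + 1 - n = (ℓ - n) + 1 := by omega
      rw [h1]
      have := centralBinom_succ_add (ℓ - n)
      nlinarith [this]
    rw [Finset.sum_range_succ]
    have h0 : Nat.centralBinom (ℓ + 1 - (ℓ + 1)) = 1 := by simp [Nat.centralBinom]
    rw [Nat.sub_self] at h0 ⊢
    rw [Nat.centralBinom_zero, mul_one]
    have := two_mul_conv_catalan ℓ
    omega
    
lemma buddA_le_one (n : ℕ) : buddA n ≤ 1 := by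
  have h : (Nat.centralBinom n : ℝ) ≤ 4 ^ n := by
    have key : Nat.centralBinom n * Nat.centralBinom (n - n) ≤ 4 ^ n := by
      rw [← centralBinom_conv n]
      exact Finset.single_le_sum (f := fun k => Nat.centralBinom k * Nat.centralBinom (n - k))
        (fun i _ => Nat.zero_le _) (Finset.self_mem_range_succ n)
    rw [Nat.sub_self, Nat.centralBinom_zero, mul_one] at key
    exact_mod_cast key
  rw [buddA, div_le_one (by positivity)]
  exact h

lemma buddA_succ (n : ℕ) : buddA (n + 1) = buddA n * ((2 * n + 1) / (2 * n + 2)) := by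
  have h := Nat.succ_mul_centralBinom_succ n
  have h' : ((n : ℝ) + 1) * (Nat.centralBinom (n + 1) : ℝ)
      = 2 * (2 * n + 1) * (Nat.centralBinom n : ℝ) := by exact_mod_cast h
  have hne : ((n : ℝ) + 1) ≠ 0 := by positivity
  have hc : (Nat.centralBinom (n + 1) : ℝ)
      = 2 * (2 * n + 1) * (Nat.centralBinom n : ℝ) / (n + 1) := by
    field_simp
    linarith [h']
  unfold buddA
  rw [hc, pow_succ]
  field_simp
  ring

lemma buddA_anti (n : ℕ) : buddA (n + 1) ≤ buddA n := by
  rw [buddA_succ n]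
  have h1 : (2 * (n : ℝ) + 1) / (2 * n + 2) ≤ 1 := by
    rw [div_le_one (by positivity)]; linarith
  nlinarith [buddA_pos n, h1]

lemma buddA_anti' : ∀ m n, m ≤ n → buddA n ≤ buddA m := by
  intro m n h
  induction n with
  | zero => simp_all
  | succ n ih =>
    rcases Nat.lt_or_ge m (n + 1) with h' | h'
    · exact (buddA_anti n).trans (ih (by omega))
    · have : m = n + 1 := by omega
      simp [this]

/-- `buddA n * √(n+1) ≤ 1`. -/
lemma buddA_sqrt_le (n : ℕ) : buddA n * Real.sqrt (n + 1) ≤ 1 := by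
  induction n with
  | zero => simp [buddA_zero]
  | succ n ih =>
    have key : (2 * (n : ℝ) + 1) * Real.sqrt (n + 1 + 1) ≤ (2 * n + 2) * Real.sqrt (n + 1) := by
      have h1 : (2 * (n : ℝ) + 1) * Real.sqrt (n + 1 + 1)
          = Real.sqrt ((2 * n + 1) ^ 2 * (n + 1 + 1)) := by
        rw [Real.sqrt_mul (by positivity), Real.sqrt_sq (by positivity)]
      have h2 : (2 * (n : ℝ) + 2) * Real.sqrt (n + 1)
          = Real.sqrt ((2 * n + 2) ^ 2 * (n + 1)) := by
        rw [Real.sqrt_mul (by positivity), Real.sqrt_sq (by positivity)]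
      rw [h1, h2]
      apply Real.sqrt_le_sqrt
      nlinarith [sq_nonneg ((n : ℝ))]
    rw [buddA_succ n]
    have hA := buddA_pos n
    have h2 : (0 : ℝ) < 2 * n + 2 := by positivity
    calc buddA n * ((2 * ↑n + 1) / (2 * ↑n + 2)) * Real.sqrt (↑(n + 1) + 1)
        = buddA n * ((2 * ↑n + 1) * Real.sqrt (↑n + 1 + 1)) / (2 * ↑n + 2) := by
          push_cast; ring
      _ ≤ buddA n * ((2 * ↑n + 2) * Real.sqrt (↑n + 1)) / (2 * ↑n + 2) := by
          gcongr
      _ = buddA n * Real.sqrt (↑n + 1) := by field_simp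
      _ ≤ 1 := ih

/-- real version of the convolution identity. -/
lemma buddA_conv (ℓ : ℕ) : ∑ n ∈ range (ℓ + 1), buddA n * buddA (ℓ - n) = 1 := by
  have key : ∀ n ∈ range (ℓ + 1), buddA n * buddA (ℓ - n)
      = (Nat.centralBinom n * Nat.centralBinom (ℓ - n) : ℝ) / 4 ^ ℓ := by
    intro n hn
    have hn' : n ≤ ℓ := by simpa [Nat.lt_succ_iff] using hn
    unfold buddA
    rw [div_mul_div_comm, ← pow_add]
    congr 2
    omega
  rw [Finset.sum_congr rfl key, ← Finset.sum_div]
  rw [div_eq_one_iff_eq (by positivity)]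
  exact_mod_cast congrArg (Nat.cast : ℕ → ℝ) (centralBinom_conv ℓ)

lemma summable_norm_buddA {x : ℝ} (hx : |x| < 1) :
    Summable (fun n => ‖buddA n * x ^ n‖) := by
  apply Summable.of_nonneg_of_le (fun n => norm_nonneg _) (fun n => ?_)
    (summable_geometric_of_lt_one (abs_nonneg x) hx)
  rw [norm_mul, norm_pow, Real.norm_eq_abs, Real.norm_eq_abs,
    abs_of_pos (buddA_pos n)]
  calc buddA n * |x| ^ n ≤ 1 * |x| ^ n := by
        apply mul_le_mul_of_nonneg_right (buddA_le_one n) (by positivity)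
    _ = |x| ^ n := one_mul _

lemma summable_buddA {x : ℝ} (hx : |x| < 1) : Summable (fun n => buddA n * x ^ n) :=
  (summable_norm_buddA hx).of_norm

lemma tsum_buddA_sq {x : ℝ} (hx : |x| < 1) :
    (∑' n, buddA n * x ^ n) * (∑' n, buddA n * x ^ n) = (1 - x)⁻¹ := by
  have hs := summable_norm_buddA hx
  rw [tsum_mul_tsum_eq_tsum_sum_range_of_summable_norm hs hs]
  have key : ∀ ℓ : ℕ, ∑ k ∈ range (ℓ + 1), (buddA k * x ^ k) * (buddA (ℓ - k) * x ^ (ℓ - k))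
      = x ^ ℓ := by
    intro ℓ
    have h1 : ∀ k ∈ range (ℓ + 1),
        (buddA k * x ^ k) * (buddA (ℓ - k) * x ^ (ℓ - k))
          = (buddA k * buddA (ℓ - k)) * x ^ ℓ := by
      intro k hk
      have hk' : k ≤ ℓ := by simpa [Nat.lt_succ_iff] using hk
      have : x ^ k * x ^ (ℓ - k) = x ^ ℓ := by
        rw [← pow_add]
        congr 1
        omega
      calc (buddA k * x ^ k) * (buddA (ℓ - k) * x ^ (ℓ - k))
          = (buddA k * buddA (ℓ - k)) * (x ^ k * x ^ (ℓ - k)) := by ring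
        _ = (buddA k * buddA (ℓ - k)) * x ^ ℓ := by rw [this]
    rw [Finset.sum_congr rfl h1, ← Finset.sum_mul, buddA_conv, one_mul]
  rw [tsum_congr key]
  rw [tsum_geometric_of_norm_lt_one (by rwa [Real.norm_eq_abs])]

lemma tsum_buddA_pos {x : ℝ} (hx : |x| < 1) : 0 < ∑' n, buddA n * x ^ n := by
  have hx1 : -1 < x := by cases abs_lt.mp hx; assumption
  have hx2 : x < 1 := by cases abs_lt.mp hx; assumption
  set f : ℕ → ℝ := fun n => buddA n * x ^ n with hf_def
  have hf := summable_buddA hx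
  have he : Summable fun k => f (2 * k) :=
    hf.comp_injective (fun a b h => by omega)
  have ho : Summable fun k => f (2 * k + 1) :=
    hf.comp_injective (fun a b h => by omega)
  have hteq : ∑' n, f n = ∑' k, (f (2 * k) + f (2 * k + 1)) := by
    rw [(he.hasSum.even_add_odd ho.hasSum).tsum_eq, he.tsum_add ho]
  have hpair : ∀ k : ℕ, 0 ≤ f (2 * k) + f (2 * k + 1) := by
    intro k
    have hx2k : (0 : ℝ) ≤ x ^ (2 * k) := by
      rw [pow_mul]
      positivity
    have hxs : x ^ (2 * k + 1) = x ^ (2 * k) * x := by rw [pow_succ]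
    have h3 : -(x ^ (2 * k)) ≤ x ^ (2 * k) * x := by nlinarith
    have h4 := buddA_anti (2 * k)
    have h5 := (buddA_pos (2 * k + 1)).le
    have h6 := (buddA_pos (2 * k)).le
    simp only [hf_def, hxs]
    nlinarith [mul_le_mul_of_nonneg_left h3 h5]
  have hg : Summable fun k => f (2 * k) + f (2 * k + 1) := he.add ho
  have h0 : 0 < f (2 * 0) + f (2 * 0 + 1) := by
    simp only [hf_def]
    norm_num [buddA_zero, buddA_one]
    linarith
  calc (0 : ℝ) < f (2 * 0) + f (2 * 0 + 1) := h0
    _ ≤ ∑' k, (f (2 * k) + f (2 * k + 1)) := hg.le_tsum 0 (fun i _ => hpair i)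
    _ = ∑' n, f n := hteq.symm

lemma tsum_buddA_sqrt {x : ℝ} (hx : |x| < 1) :
    (∑' n, buddA n * x ^ n) * Real.sqrt (1 - x) = 1 := by
  have hpos := tsum_buddA_pos hx
  have hsq := tsum_buddA_sq hx
  have h1x : (0 : ℝ) < 1 - x := by
    cases abs_lt.mp hx
    linarith
  set t := ∑' n, buddA n * x ^ n with ht_def
  have ht : t = Real.sqrt ((1 - x)⁻¹) := by
    rw [← hsq, Real.sqrt_mul_self hpos.le]
  rw [ht, ← Real.sqrt_mul (by positivity), inv_mul_cancel₀ h1x.ne', Real.sqrt_one]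

lemma buddA_eq_stirling {n : ℕ} (hn : 1 ≤ n) :
    buddA n * Real.sqrt n = Stirling.stirlingSeq (2 * n) / (Stirling.stirlingSeq n) ^ 2 := by
  have hnR : (0 : ℝ) < n := by exact_mod_cast hn
  have hkey : (Nat.centralBinom n : ℝ) * (n.factorial : ℝ) * (n.factorial : ℝ)
      = ((2 * n).factorial : ℝ) := by
    have h := Nat.choose_mul_factorial_mul_factorial (show n ≤ 2 * n by omega)
    rw [show 2 * n - n = n from by omega] at h
    rw [Nat.centralBinom_eq_two_mul_choose]
    exact_mod_cast h
  rw [Stirling.stirlingSeq, Stirling.stirlingSeq]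
  have hc2 : ((2 * n : ℕ) : ℝ) = 2 * (n : ℝ) := by push_cast; ring
  rw [hc2]
  have hu : Real.sqrt n ^ 2 = (n : ℝ) := Real.sq_sqrt hnR.le
  have hv : Real.sqrt (2 * (n : ℝ)) ^ 2 = 2 * (n : ℝ) := Real.sq_sqrt (by positivity)
  have hw : Real.sqrt (2 * (2 * (n : ℝ))) = 2 * Real.sqrt n := by
    rw [show 2 * (2 * (n : ℝ)) = 2 ^ 2 * n by ring, Real.sqrt_mul (by positivity),
      Real.sqrt_sq (by norm_num)]
  have hpow : (2 * (n : ℝ) / Real.exp 1) ^ (2 * n)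
      = 4 ^ n * (((n : ℝ) / Real.exp 1) ^ n) ^ 2 := by
    rw [show 2 * (n : ℝ) / Real.exp 1 = 2 * ((n : ℝ) / Real.exp 1) by ring, mul_pow,
      ← pow_mul, pow_mul 2 2 n]
    norm_num
    rw [Nat.mul_comm 2 n]
  rw [hw, hpow, ← hkey]
  have hu0 : Real.sqrt (n : ℝ) ≠ 0 := by positivity
  have hF : ((n : ℝ) / Real.exp 1) ^ n ≠ 0 :=
    pow_ne_zero _ (div_ne_zero hnR.ne' (Real.exp_ne_zero 1))
  have hK : (n.factorial : ℝ) ≠ 0 := by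
    exact_mod_cast n.factorial_ne_zero
  have hvv : Real.sqrt (2 * (n : ℝ)) ^ 2 = 2 * Real.sqrt (n : ℝ) ^ 2 := by
    rw [hu, hv]
  unfold buddA
  exact aux_alg _ _ _ _ _ _ hu0 hF hK (by positivity) hvv

lemma buddA_sqrt_pi_tendsto :
    Tendsto (fun n : ℕ => buddA n * Real.sqrt (Real.pi * n)) atTop (𝓝 1) := by
  have hS := Stirling.tendsto_stirlingSeq_sqrt_pi
  have h2n : Tendsto (fun n : ℕ => (2 * n : ℕ)) atTop atTop := by
    apply tendsto_atTop_atTop_of_monotone (fun a b h => by omega)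
    intro b; exact ⟨b, by omega⟩
  have h2 : Tendsto (fun n : ℕ => Stirling.stirlingSeq (2 * n)) atTop (𝓝 (Real.sqrt Real.pi)) :=
    hS.comp h2n
  have hpi : (0 : ℝ) < Real.pi := Real.pi_pos
  have hne : (Real.sqrt Real.pi) ^ 2 ≠ 0 := by positivity
  have key : Tendsto (fun n : ℕ => Real.sqrt Real.pi *
      (Stirling.stirlingSeq (2 * n) / (Stirling.stirlingSeq n) ^ 2)) atTop
      (𝓝 (Real.sqrt Real.pi * (Real.sqrt Real.pi / (Real.sqrt Real.pi) ^ 2))) :=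
    tendsto_const_nhds.mul (h2.div (hS.pow 2) hne)
  have hlim : Real.sqrt Real.pi * (Real.sqrt Real.pi / (Real.sqrt Real.pi) ^ 2) = 1 := by
    rw [Real.sq_sqrt hpi.le]
    rw [div_eq_mul_inv, ← mul_assoc, Real.mul_self_sqrt hpi.le]
    field_simp
  rw [hlim] at key
  apply key.congr'
  filter_upwards [eventually_ge_atTop 1] with n hn
  rw [← buddA_eq_stirling hn, Real.sqrt_mul hpi.le]
  ring

lemma buddA_shift_tendsto (m : ℕ) :
    Tendsto (fun ℓ : ℕ => buddA (ℓ - m) * Real.sqrt (Real.pi * ℓ)) atTop (𝓝 1) := by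
  have h1 : Tendsto (fun ℓ : ℕ => buddA (ℓ - m) * Real.sqrt (Real.pi * ((ℓ - m : ℕ) : ℝ)))
      atTop (𝓝 1) := buddA_sqrt_pi_tendsto.comp (tendsto_sub_atTop_nat m)
  have hsub : Tendsto (fun ℓ : ℕ => (ℓ : ℝ) - m) atTop atTop :=
    tendsto_atTop_add_const_right atTop (-(m : ℝ)) tendsto_natCast_atTop_atTop |>.congr
      (fun ℓ => by ring)
  have hquot : Tendsto (fun ℓ : ℕ => (ℓ : ℝ) / ((ℓ : ℝ) - m)) atTop (𝓝 1) := by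
    have h0 : Tendsto (fun ℓ : ℕ => (m : ℝ) / ((ℓ : ℝ) - m)) atTop (𝓝 0) :=
      Tendsto.div_atTop tendsto_const_nhds hsub
    have := h0.const_add (1 : ℝ)
    rw [add_zero] at this
    apply this.congr'
    filter_upwards [eventually_ge_atTop (m + 1)] with ℓ hℓ
    have hℓR : (m : ℝ) < ℓ := by exact_mod_cast Nat.lt_of_lt_of_le (Nat.lt_succ_self m) hℓ
    have hne : (ℓ : ℝ) - m ≠ 0 := by linarith
    field_simp
    ring
  have h2 : Tendsto (fun ℓ : ℕ => Real.sqrt ((ℓ : ℝ) / ((ℓ : ℝ) - m))) atTop (𝓝 1) := by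
    have := (Real.continuous_sqrt.tendsto' 1 1 Real.sqrt_one).comp hquot
    exact this
  have := h1.mul h2
  rw [mul_one] at this
  apply this.congr'
  filter_upwards [eventually_ge_atTop (m + 1)] with ℓ hℓ
  have hℓR : (m : ℝ) < ℓ := by exact_mod_cast Nat.lt_of_lt_of_le (Nat.lt_succ_self m) hℓ
  have hcast : ((ℓ - m : ℕ) : ℝ) = (ℓ : ℝ) - m := by
    have : m ≤ ℓ := by omega
    push_cast [this]
    ring
  rw [hcast]
  have hpos : (0 : ℝ) < (ℓ : ℝ) - m := by linarith
  rw [mul_assoc, ← Real.sqrt_mul (by positivity)]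
  congr 2
  field_simp

lemma geom_sum_le' {ρ : ℝ} (h0 : 0 ≤ ρ) (h1 : ρ < 1) (s : Finset ℕ) :
    ∑ n ∈ s, ρ ^ n ≤ (1 - ρ)⁻¹ :=
  (Summable.sum_le_tsum s (fun i _ => by positivity)
    (summable_geometric_of_lt_one h0 h1)).trans_eq (tsum_geometric_of_lt_one h0 h1)

lemma geom_Ico_le {ρ : ℝ} (h0 : 0 ≤ ρ) (h1 : ρ < 1) (a b : ℕ) :
    ∑ n ∈ Finset.Ico a b, ρ ^ n ≤ ρ ^ a * (1 - ρ)⁻¹ := by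
  rw [Finset.sum_Ico_eq_sum_range]
  calc ∑ k ∈ range (b - a), ρ ^ (a + k)
      = ρ ^ a * ∑ k ∈ range (b - a), ρ ^ k := by
        rw [Finset.mul_sum]
        exact Finset.sum_congr rfl (fun k _ => pow_add ρ a k)
    _ ≤ ρ ^ a * (1 - ρ)⁻¹ := by
        apply mul_le_mul_of_nonneg_left (geom_sum_le' h0 h1 _) (by positivity)

lemma buddA_le_inv_sqrt (k : ℕ) : buddA k ≤ (Real.sqrt ((k : ℝ) + 1))⁻¹ := by
  have h := buddA_sqrt_le k
  have hs : (0 : ℝ) < Real.sqrt ((k : ℝ) + 1) := Real.sqrt_pos.2 (by positivity)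
  rw [inv_eq_one_div, le_div_iff₀ hs]
  exact h

lemma main_rewrite (ℓ : ℕ) (r : ℝ) :
    ((4 : ℝ) ^ ℓ)⁻¹ * (Nat.choose (2 * ℓ) ℓ : ℝ) *
        (∑ n ∈ range (ℓ + 1),
          ((Nat.choose (2 * n) n : ℝ) * (Nat.choose (2 * ℓ - 2 * n) (ℓ - n) : ℝ)
            / (Nat.choose (2 * ℓ) ℓ : ℝ)) * (-r) ^ n) *
        Real.sqrt ((ℓ : ℝ) * Real.pi * (1 + r))
      = ((∑ n ∈ range (ℓ + 1), buddA n * buddA (ℓ - n) * (-r) ^ n)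
          * Real.sqrt (Real.pi * ℓ)) * Real.sqrt (1 + r) := by
  have hC : (Nat.choose (2 * ℓ) ℓ : ℝ) ≠ 0 := by
    rw [← Nat.centralBinom_eq_two_mul_choose]
    exact_mod_cast (Nat.centralBinom_ne_zero ℓ)
  have hsum : ((4 : ℝ) ^ ℓ)⁻¹ * (Nat.choose (2 * ℓ) ℓ : ℝ) *
      (∑ n ∈ range (ℓ + 1),
        ((Nat.choose (2 * n) n : ℝ) * (Nat.choose (2 * ℓ - 2 * n) (ℓ - n) : ℝ)
          / (Nat.choose (2 * ℓ) ℓ : ℝ)) * (-r) ^ n)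
      = ∑ n ∈ range (ℓ + 1), buddA n * buddA (ℓ - n) * (-r) ^ n := by
    rw [Finset.mul_sum]
    apply Finset.sum_congr rfl
    intro n hn
    have hn' : n ≤ ℓ := by simpa [Nat.lt_succ_iff] using hn
    have h2 : 2 * ℓ - 2 * n = 2 * (ℓ - n) := by omega
    rw [h2]
    unfold buddA
    rw [← Nat.centralBinom_eq_two_mul_choose, ← Nat.centralBinom_eq_two_mul_choose,
      ← Nat.centralBinom_eq_two_mul_choose]
    have h4 : (4 : ℝ) ^ ℓ = 4 ^ n * 4 ^ (ℓ - n) := by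
      rw [← pow_add]
      congr 1
      omega
    have hC' : (Nat.centralBinom ℓ : ℝ) ≠ 0 := by
      exact_mod_cast (Nat.centralBinom_ne_zero ℓ)
    rw [h4]
    field_simp
  rw [show (ℓ : ℝ) * Real.pi = Real.pi * ℓ from mul_comm _ _,
    Real.sqrt_mul (by positivity), hsum]
  ring

end BuddAux

open BuddAux Topology in
/-- Budd's asymptotic: for `r ∈ (−1,1)`,
`h_r(ℓ) = 4^{−ℓ} C(2ℓ,ℓ) Σ_{n=0}^{ℓ} [C(2n,n)C(2ℓ−2n,ℓ−n)/C(2ℓ,ℓ)] (−r)^n`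
satisfies `h_r(ℓ) ~ 1/√(ℓπ(1+r))` as `ℓ → ∞`, uniformly for `r` in compact
subsets of `(−1,1)` (stated as uniform convergence of
`h_r(ℓ)·√(ℓπ(1+r))` to `1`). -/
theorem budd_asymptotic (K : Set ℝ) (hK : IsCompact K) (hK' : K ⊆ Set.Ioo (-1 : ℝ) 1) :
    TendstoUniformlyOn
      (fun (ℓ : ℕ) (r : ℝ) =>
        ((4 : ℝ) ^ ℓ)⁻¹ * (Nat.choose (2 * ℓ) ℓ : ℝ) *
          (∑ n ∈ range (ℓ + 1),
            ((Nat.choose (2 * n) n : ℝ) * (Nat.choose (2 * ℓ - 2 * n) (ℓ - n) : ℝ)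
              / (Nat.choose (2 * ℓ) ℓ : ℝ)) * (-r) ^ n) *
          Real.sqrt ((ℓ : ℝ) * Real.pi * (1 + r)))
      (fun _ => 1) atTop K := by
  rcases K.eq_empty_or_nonempty with hKe | hKne
  · rw [hKe]; exact tendstoUniformlyOn_empty
  obtain ⟨r₀, hr₀K, hmax⟩ := hK.exists_isMaxOn hKne continuous_abs.continuousOn
  set ρ : ℝ := |r₀| with hρdef
  have hρ0 : 0 ≤ ρ := abs_nonneg _
  have hρ1 : ρ < 1 := by
    obtain ⟨ha, hb⟩ := hK' hr₀K
    rw [hρdef, abs_lt]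
    exact ⟨by linarith, hb⟩
  have hbound : ∀ r ∈ K, |r| ≤ ρ := fun r hr => hmax hr
  set C : ℝ := (1 - ρ)⁻¹ with hCdef
  have hC0 : 0 < C := by rw [hCdef]; exact inv_pos.2 (by linarith)
  rw [Metric.tendstoUniformlyOn_iff]
  intro ε hε
  set δ : ℝ := ε / (16 * C) with hδdef
  have hδ0 : 0 < δ := div_pos hε (by linarith)
  have hδC : δ * C = ε / 16 := by
    rw [hδdef]
    field_simp
  have hMex : ∃ M : ℕ, 4 * ρ ^ (M + 1) * C < ε / 8 := by
    have ht : Tendsto (fun m : ℕ => 4 * ρ ^ (m + 1) * C) atTop (𝓝 0) := by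
      have t2 : Tendsto (fun m : ℕ => ρ ^ m) atTop (𝓝 0) :=
        tendsto_pow_atTop_nhds_zero_of_lt_one hρ0 hρ1
      have := ((t2.comp (tendsto_add_atTop_nat 1)).const_mul 4).mul_const C
      simpa using this
    exact (ht.eventually (gt_mem_nhds (by positivity : (0 : ℝ) < ε / 8))).exists
  obtain ⟨M, hM⟩ := hMex
  have hE1 : ∀ᶠ ℓ : ℕ in atTop, ∀ n ∈ Finset.range (M + 1),
      |buddA (ℓ - n) * Real.sqrt (Real.pi * ℓ) - 1| ≤ δ := by
    rw [Filter.eventually_all_finset]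
    intro n _
    have hball : ∀ᶠ y in 𝓝 (1 : ℝ), |y - 1| ≤ δ := by
      filter_upwards [Metric.ball_mem_nhds (1 : ℝ) hδ0] with y hy
      rw [Metric.mem_ball, Real.dist_eq] at hy
      exact hy.le
    exact (buddA_shift_tendsto n).eventually hball
  have hE2 : ∀ᶠ ℓ : ℕ in atTop,
      (Real.sqrt (Real.pi * ℓ) + 1) * ρ ^ (ℓ / 2) * C < ε / 8 := by
    have hg : Tendsto (fun m : ℕ => (Real.pi * (2 * m + 1) + 2) * ρ ^ m * C) atTop (𝓝 0) := by
      have t1 : Tendsto (fun m : ℕ => (m : ℝ) ^ 1 * ρ ^ m) atTop (𝓝 0) :=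
        tendsto_pow_const_mul_const_pow_of_abs_lt_one 1 (by rwa [abs_of_nonneg hρ0])
      have t2 : Tendsto (fun m : ℕ => ρ ^ m) atTop (𝓝 0) :=
        tendsto_pow_atTop_nhds_zero_of_lt_one hρ0 hρ1
      have hh := (t1.const_mul (2 * Real.pi * C)).add (t2.const_mul ((Real.pi + 2) * C))
      rw [mul_zero, mul_zero, add_zero] at hh
      apply hh.congr
      intro m
      ring
    have hgev := hg.eventually (gt_mem_nhds (show (0 : ℝ) < ε / 8 by positivity))
    rw [eventually_atTop] at hgev
    obtain ⟨N, hN⟩ := hgev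
    rw [eventually_atTop]
    refine ⟨2 * N + 1, fun ℓ hℓ => ?_⟩
    have hm : N ≤ ℓ / 2 := by omega
    have hkey := hN (ℓ / 2) hm
    have hle : (Real.sqrt (Real.pi * ℓ) + 1) * ρ ^ (ℓ / 2) * C
        ≤ (Real.pi * (2 * (ℓ / 2 : ℕ) + 1) + 2) * ρ ^ (ℓ / 2) * C := by
      have hsq : Real.sqrt (Real.pi * ℓ) + 1 ≤ Real.pi * (2 * (ℓ / 2 : ℕ) + 1) + 2 := by
        have h1 : Real.sqrt (Real.pi * ℓ) ≤ Real.pi * ℓ + 1 := by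
          rcases le_total (Real.pi * (ℓ : ℝ)) 1 with h | h
          · have h0 : (0 : ℝ) ≤ Real.pi * ℓ := by positivity
            have := Real.sqrt_le_one.mpr h
            linarith
          · have hy : Real.pi * (ℓ : ℝ) ≤ (Real.pi * ℓ) ^ 2 := by nlinarith
            have := (Real.sqrt_le_sqrt hy).trans_eq (Real.sqrt_sq (by positivity))
            linarith
        have h2 : Real.pi * (ℓ : ℝ) ≤ Real.pi * (2 * (ℓ / 2 : ℕ) + 1) := by
          apply mul_le_mul_of_nonneg_left _ Real.pi_pos.le
          exact_mod_cast Nat.cast_le.2 (by omega : ℓ ≤ 2 * (ℓ / 2) + 1)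
        linarith
      apply mul_le_mul_of_nonneg_right (mul_le_mul_of_nonneg_right hsq (by positivity)) hC0.le
    exact lt_of_le_of_lt hle hkey
  have hE3 : ∀ᶠ ℓ : ℕ in atTop, ρ ^ (ℓ + 1) * C < ε / 8 := by
    have t2 : Tendsto (fun ℓ : ℕ => ρ ^ (ℓ + 1) * C) atTop (𝓝 0) := by
      have := ((tendsto_pow_atTop_nhds_zero_of_lt_one hρ0 hρ1).comp
        (tendsto_add_atTop_nat 1)).mul_const C
      simpa using this
    exact t2.eventually (gt_mem_nhds (by positivity))
  filter_upwards [hE1, hE2, hE3] with ℓ h1 h2 h3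
  intro r hrK
  obtain ⟨hra, hrb⟩ := hK' hrK
  have h1r : (0 : ℝ) < 1 + r := by linarith
  have hxρ : |(-r)| ≤ ρ := by rw [abs_neg]; exact hbound r hrK
  have hx1 : |(-r)| < 1 := lt_of_le_of_lt hxρ hρ1
  rw [Real.dist_eq, main_rewrite ℓ r]
  set x : ℝ := -r with hxdef
  have hsummable : Summable (fun n => buddA n * x ^ n) := summable_buddA hx1
  set T : ℝ := ∑' n, buddA n * x ^ n with hTdef
  have hTsq : T * Real.sqrt (1 + r) = 1 := by
    have h := tsum_buddA_sqrt hx1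
    rw [show 1 - x = 1 + r by rw [hxdef]; ring] at h
    exact h
  set S : ℝ := ∑ n ∈ range (ℓ + 1), buddA n * buddA (ℓ - n) * x ^ n with hSdef
  set Q : ℝ := Real.sqrt (Real.pi * ℓ) with hQdef
  have hQ0 : 0 ≤ Q := Real.sqrt_nonneg _
  have hsqrt2 : Real.sqrt (1 + r) ≤ 2 := by
    rw [show (2 : ℝ) = Real.sqrt 4 by
      rw [show (4 : ℝ) = 2 ^ 2 by norm_num, Real.sqrt_sq]; norm_num]
    exact Real.sqrt_le_sqrt (by linarith)
  -- splitting of the tsum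
  have hsplit : T = (∑ n ∈ range (ℓ + 1), buddA n * x ^ n)
      + ∑' i, buddA (i + (ℓ + 1)) * x ^ (i + (ℓ + 1)) :=
    (Summable.sum_add_tsum_nat_add (ℓ + 1) hsummable).symm
  set tail : ℝ := ∑' i, buddA (i + (ℓ + 1)) * x ^ (i + (ℓ + 1)) with htaildef
  have hterm : ∀ k : ℕ, |buddA k * x ^ k| ≤ ρ ^ k := by
    intro k
    rw [abs_mul, abs_of_pos (buddA_pos k), abs_pow]
    calc buddA k * |x| ^ k ≤ 1 * ρ ^ k := by
          apply mul_le_mul (buddA_le_one k) (pow_le_pow_left₀ (abs_nonneg _) hxρ k)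
            (by positivity) one_pos.le
      _ = ρ ^ k := one_mul _
  have htail : |tail| ≤ ρ ^ (ℓ + 1) * C := by
    have hsn : Summable (fun i => ‖buddA (i + (ℓ + 1)) * x ^ (i + (ℓ + 1))‖) :=
      (summable_nat_add_iff (f := fun n => ‖buddA n * x ^ n‖) (ℓ + 1)).2
        (summable_norm_buddA hx1)
    have hsg : Summable (fun i : ℕ => ρ ^ (i + (ℓ + 1))) := by
      apply Summable.congr ((summable_geometric_of_lt_one hρ0 hρ1).mul_right (ρ ^ (ℓ + 1)))
      intro i
      exact (pow_add ρ i (ℓ + 1)).symm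
    calc |tail| ≤ ∑' i, ‖buddA (i + (ℓ + 1)) * x ^ (i + (ℓ + 1))‖ := by
          rw [← Real.norm_eq_abs]
          exact norm_tsum_le_tsum_norm hsn
      _ ≤ ∑' i, ρ ^ (i + (ℓ + 1)) := by
          apply Summable.tsum_le_tsum _ hsn hsg
          intro i
          rw [Real.norm_eq_abs]
          exact hterm (i + (ℓ + 1))
      _ = ρ ^ (ℓ + 1) * C := by
          rw [tsum_congr (fun i => pow_add ρ i (ℓ + 1)), tsum_mul_right,
            tsum_geometric_of_lt_one hρ0 hρ1, hCdef]
          ring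
  have hdiff : S * Q - T = (∑ n ∈ range (ℓ + 1), buddA n * x ^ n * (buddA (ℓ - n) * Q - 1))
      - tail := by
    rw [hsplit, hSdef, Finset.sum_mul]
    have hc : ∀ n ∈ range (ℓ + 1), buddA n * x ^ n * (buddA (ℓ - n) * Q - 1)
        = buddA n * buddA (ℓ - n) * x ^ n * Q - buddA n * x ^ n := fun n _ => by ring
    rw [Finset.sum_congr rfl hc, Finset.sum_sub_distrib]
    ring
  have habs : |S * Q - T| ≤ (∑ n ∈ range (ℓ + 1), ρ ^ n * |buddA (ℓ - n) * Q - 1|)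
      + ρ ^ (ℓ + 1) * C := by
    rw [hdiff, sub_eq_add_neg]
    refine (abs_add_le _ _).trans ?_
    rw [abs_neg]
    apply add_le_add _ htail
    refine (Finset.abs_sum_le_sum_abs _ _).trans (Finset.sum_le_sum ?_)
    intro n hn
    rw [abs_mul]
    exact mul_le_mul_of_nonneg_right (hterm n) (abs_nonneg _)
  -- the three-region bound
  have hsum_bound : ∑ n ∈ range (ℓ + 1), ρ ^ n * |buddA (ℓ - n) * Q - 1|
      ≤ δ * C + 4 * ρ ^ (M + 1) * C + (Q + 1) * ρ ^ (ℓ / 2) * C := by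
    have hpoint : ∀ n ∈ range (ℓ + 1), ρ ^ n * |buddA (ℓ - n) * Q - 1|
        ≤ (if n ≤ M then ρ ^ n * δ else 0)
          + (if M < n ∧ 2 * n ≤ ℓ then 4 * ρ ^ n else 0)
          + (if M < n ∧ ℓ < 2 * n then (Q + 1) * ρ ^ n else 0) := by
      intro n hn
      have hn' : n ≤ ℓ := by simpa [Nat.lt_succ_iff] using hn
      by_cases hnM : n ≤ M
      · have hb := h1 n (Finset.mem_range.2 (Nat.lt_succ_of_le hnM))
        rw [if_pos hnM, if_neg (by omega), if_neg (by omega), add_zero, add_zero]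
        exact mul_le_mul_of_nonneg_left hb (by positivity)
      · push_neg at hnM
        have hbQ : 0 ≤ buddA (ℓ - n) * Q := mul_nonneg (buddA_pos _).le hQ0
        by_cases h2n : 2 * n ≤ ℓ
        · rw [if_neg (by omega), if_pos ⟨hnM, h2n⟩, if_neg (by omega), zero_add, add_zero]
          have hb3 : buddA (ℓ - n) * Q ≤ 3 := by
            have hA := buddA_le_inv_sqrt (ℓ - n)
            have hcast : ((ℓ - n : ℕ) : ℝ) = (ℓ : ℝ) - n := by
              push_cast [hn']
              ring
            have hQle : Q ≤ 3 * Real.sqrt (((ℓ - n : ℕ) : ℝ) + 1) := by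
              rw [hQdef, show (3 : ℝ) * Real.sqrt (((ℓ - n : ℕ) : ℝ) + 1)
                  = Real.sqrt (9 * (((ℓ - n : ℕ) : ℝ) + 1)) by
                rw [show (9 : ℝ) = 3 ^ 2 by norm_num, Real.sqrt_mul (by positivity),
                  Real.sqrt_sq (by norm_num)]]
              apply Real.sqrt_le_sqrt
              have hπ4 := Real.pi_le_four
              have h2nR : 2 * (n : ℝ) ≤ (ℓ : ℝ) := by exact_mod_cast h2n
              have hl0 : (0 : ℝ) ≤ (ℓ : ℝ) := Nat.cast_nonneg ℓ
              have hπl : Real.pi * (ℓ : ℝ) ≤ 4 * ℓ :=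
                mul_le_mul_of_nonneg_right hπ4 hl0
              rw [hcast]
              linarith
            have hs0 : 0 ≤ (Real.sqrt (((ℓ - n : ℕ) : ℝ) + 1))⁻¹ := by positivity
            calc buddA (ℓ - n) * Q
                ≤ (Real.sqrt (((ℓ - n : ℕ) : ℝ) + 1))⁻¹
                  * (3 * Real.sqrt (((ℓ - n : ℕ) : ℝ) + 1)) :=
                  mul_le_mul hA hQle hQ0 hs0
              _ = 3 := by
                  rw [inv_mul_eq_div, mul_div_assoc, div_self
                    (by positivity : Real.sqrt (((ℓ - n : ℕ) : ℝ) + 1) ≠ 0), mul_one]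
          have habs4 : |buddA (ℓ - n) * Q - 1| ≤ 4 := by
            rw [abs_le]
            constructor <;> linarith
          calc ρ ^ n * |buddA (ℓ - n) * Q - 1| ≤ ρ ^ n * 4 :=
                mul_le_mul_of_nonneg_left habs4 (by positivity)
            _ = 4 * ρ ^ n := by ring
        · rw [if_neg (by omega), if_neg (by omega), if_pos ⟨hnM, by omega⟩, zero_add, zero_add]
          have hbQ1 : buddA (ℓ - n) * Q ≤ Q := by
            calc buddA (ℓ - n) * Q ≤ 1 * Q :=
                mul_le_mul_of_nonneg_right (buddA_le_one _) hQ0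
              _ = Q := one_mul _
          have habsQ : |buddA (ℓ - n) * Q - 1| ≤ Q + 1 := by
            rw [abs_le]
            constructor <;> linarith
          calc ρ ^ n * |buddA (ℓ - n) * Q - 1| ≤ ρ ^ n * (Q + 1) :=
                mul_le_mul_of_nonneg_left habsQ (by positivity)
            _ = (Q + 1) * ρ ^ n := by ring
    refine (Finset.sum_le_sum hpoint).trans ?_
    rw [Finset.sum_add_distrib, Finset.sum_add_distrib]
    have hif1 : ∑ n ∈ range (ℓ + 1), (if n ≤ M then ρ ^ n * δ else 0) ≤ δ * C := by
      refine (Finset.sum_le_sum (g := fun n => ρ ^ n * δ) ?_).trans ?_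
      · intro n _
        by_cases h : n ≤ M
        · rw [if_pos h]
        · rw [if_neg h]
          positivity
      · rw [← Finset.sum_mul]
        calc (∑ n ∈ range (ℓ + 1), ρ ^ n) * δ ≤ C * δ :=
            mul_le_mul_of_nonneg_right (geom_sum_le' hρ0 hρ1 _) hδ0.le
          _ = δ * C := mul_comm _ _
    have hif2 : ∑ n ∈ range (ℓ + 1), (if M < n ∧ 2 * n ≤ ℓ then 4 * ρ ^ n else 0)
        ≤ 4 * ρ ^ (M + 1) * C := by
      rw [← Finset.sum_filter]
      calc ∑ n ∈ (range (ℓ + 1)).filter (fun n => M < n ∧ 2 * n ≤ ℓ), 4 * ρ ^ n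
          ≤ ∑ n ∈ Finset.Ico (M + 1) (ℓ + 1), 4 * ρ ^ n := by
            apply Finset.sum_le_sum_of_subset_of_nonneg
            · intro a ha
              simp only [Finset.mem_filter, Finset.mem_range] at ha
              simp only [Finset.mem_Ico]
              omega
            · intro i _ _
              positivity
        _ = 4 * ∑ n ∈ Finset.Ico (M + 1) (ℓ + 1), ρ ^ n := by rw [Finset.mul_sum]
        _ ≤ 4 * (ρ ^ (M + 1) * C) :=
            mul_le_mul_of_nonneg_left (geom_Ico_le hρ0 hρ1 _ _) (by norm_num)
        _ = 4 * ρ ^ (M + 1) * C := by ring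
    have hif3 : ∑ n ∈ range (ℓ + 1), (if M < n ∧ ℓ < 2 * n then (Q + 1) * ρ ^ n else 0)
        ≤ (Q + 1) * ρ ^ (ℓ / 2) * C := by
      rw [← Finset.sum_filter]
      calc ∑ n ∈ (range (ℓ + 1)).filter (fun n => M < n ∧ ℓ < 2 * n), (Q + 1) * ρ ^ n
          ≤ ∑ n ∈ Finset.Ico (ℓ / 2) (ℓ + 1), (Q + 1) * ρ ^ n := by
            apply Finset.sum_le_sum_of_subset_of_nonneg
            · intro a ha
              simp only [Finset.mem_filter, Finset.mem_range] at ha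
              simp only [Finset.mem_Ico]
              omega
            · intro i _ _
              positivity
        _ = (Q + 1) * ∑ n ∈ Finset.Ico (ℓ / 2) (ℓ + 1), ρ ^ n := by rw [Finset.mul_sum]
        _ ≤ (Q + 1) * (ρ ^ (ℓ / 2) * C) :=
            mul_le_mul_of_nonneg_left (geom_Ico_le hρ0 hρ1 _ _) (by positivity)
        _ = (Q + 1) * ρ ^ (ℓ / 2) * C := by ring
    exact add_le_add (add_le_add hif1 hif2) hif3
  -- conclusion
  have hkey : |S * Q - T| ≤ δ * C + 4 * ρ ^ (M + 1) * C + (Q + 1) * ρ ^ (ℓ / 2) * C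
      + ρ ^ (ℓ + 1) * C := by
    refine habs.trans ?_
    linarith [hsum_bound]
  have e1 : 1 - S * Q * Real.sqrt (1 + r) = (T - S * Q) * Real.sqrt (1 + r) := by
    linear_combination -hTsq
  rw [e1, abs_mul, abs_of_nonneg (Real.sqrt_nonneg _), abs_sub_comm]
  have htot0 : 0 ≤ δ * C + 4 * ρ ^ (M + 1) * C + (Q + 1) * ρ ^ (ℓ / 2) * C
      + ρ ^ (ℓ + 1) * C := le_trans (abs_nonneg _) hkey
  calc |S * Q - T| * Real.sqrt (1 + r)
      ≤ (δ * C + 4 * ρ ^ (M + 1) * C + (Q + 1) * ρ ^ (ℓ / 2) * C + ρ ^ (ℓ + 1) * C) * 2 :=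
        mul_le_mul hkey hsqrt2 (Real.sqrt_nonneg _) htot0
    _ < ε := by
        rw [hδC]
        rw [hQdef] at *
        linarith [hM, h2, h3]
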